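/- arXiv:1203.4502 — 2 statements merged into one kernel-verified Lean document; each statement's English description precedes it below -/
import Mathlib

section
/- Let d ∈ ℕ, d ≥ 2, let Φ: ℝ^d → ℝ be continuously differentiable, and let g: ℝ^d × ℝ^d → ℝ be continuously differentiable. Define (A g)(ξ, v) = −⟨v, ∇_ξ g(ξ, v)⟩ + (1/(d−1)) ⟨(I − v vᵀ) ∇Φ(ξ), ∇_v g(ξ, v)⟩. Then for every ξ ∈ ℝ^d: −∫_{S^{d−1}} (A g)(ξ, v) dν(v) = Σ_{i=1}^d ∂_{ξ_i} ( ∫_{S^{d−1}} v_i g(ξ, v) dν(v) ) − ⟨∇Φ(ξ), ∫_{S^{d−1}} v g(ξ, v) dν(v)⟩. (This is the formula (AΠ)*g = −ΠAg = (∇_ξ − ∇_ξΦ) · ∫_{S^{d−1}} v g dν used in the hypocoercivity proof.) -/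
open MeasureTheory
open scoped RealInnerProductSpace

/-- `ν` is the normalized rotation-invariant surface measure on the unit sphere of
`ℝ^n = EuclideanSpace ℝ (Fin n)`: a Borel probability measure carried by the unit sphere
and invariant under every linear isometry of the ambient space. -/
def IsUniformSphereMeasure {n : ℕ} (ν : Measure (EuclideanSpace ℝ (Fin n))) : Prop :=
  IsProbabilityMeasure ν ∧
  ν ((Metric.sphere (0 : EuclideanSpace ℝ (Fin n)) 1)ᶜ) = 0 ∧
  ∀ R : EuclideanSpace ℝ (Fin n) ≃ₗᵢ[ℝ] EuclideanSpace ℝ (Fin n), ν.map R = ν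

/-- The transport operator of the fiber lay-down model:
`(A g)(ξ, v) = -⟨v, ∇_ξ g⟩ + (1/(d-1)) ⟨(I - v vᵀ)∇Φ(ξ), ∇_v g⟩`. -/
noncomputable def transportOp (d : ℕ) (Φ : EuclideanSpace ℝ (Fin d) → ℝ)
    (g : EuclideanSpace ℝ (Fin d) × EuclideanSpace ℝ (Fin d) → ℝ)
    (p : EuclideanSpace ℝ (Fin d) × EuclideanSpace ℝ (Fin d)) : ℝ :=
  -⟪p.2, gradient (fun x => g (x, p.2)) p.1⟫
    + (1 / ((d : ℝ) - 1)) *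
        ⟪gradient Φ p.1 - ⟪gradient Φ p.1, p.2⟫ • p.2, gradient (fun u => g (p.1, u)) p.2⟫

noncomputable section RotAux

variable {d : ℕ}

/-- Rotation by angle `θ` in the `(i,j)` coordinate plane, as a plain function. -/
def rotFun (i j : Fin d) (θ : ℝ) (x : EuclideanSpace ℝ (Fin d)) : EuclideanSpace ℝ (Fin d) :=
  WithLp.toLp 2 (fun k => if k = i then (Real.cos θ * x i - Real.sin θ * x j)
    else if k = j then (Real.sin θ * x i + Real.cos θ * x j) else x k)

/-- The rotation as a linear map. -/
def rotLin (i j : Fin d) (θ : ℝ) : EuclideanSpace ℝ (Fin d) →ₗ[ℝ] EuclideanSpace ℝ (Fin d) where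
  toFun := rotFun i j θ
  map_add' x y := by
    ext k
    simp only [rotFun, PiLp.add_apply, PiLp.toLp_apply]
    split_ifs <;> ring
  map_smul' c x := by
    ext k
    simp only [rotFun, PiLp.smul_apply, smul_eq_mul, RingHom.id_apply, PiLp.toLp_apply]
    split_ifs <;> ring

lemma sum_split (i j : Fin d) (hij : i ≠ j) (f : Fin d → ℝ) :
    ∑ k, f k = f i + f j + ∑ k ∈ (Finset.univ.erase i).erase j, f k := by
  have h1 : f i + ∑ k ∈ Finset.univ.erase i, f k = ∑ k, f k :=
    Finset.add_sum_erase _ f (Finset.mem_univ i)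
  have hj : j ∈ Finset.univ.erase i := Finset.mem_erase.2 ⟨hij.symm, Finset.mem_univ j⟩
  have h2 : f j + ∑ k ∈ (Finset.univ.erase i).erase j, f k = ∑ k ∈ Finset.univ.erase i, f k :=
    Finset.add_sum_erase _ f hj
  rw [← h1, ← h2]; ring

lemma rot_inner (i j : Fin d) (hij : i ≠ j) (θ : ℝ) (x y : EuclideanSpace ℝ (Fin d)) :
    ⟪rotLin i j θ x, rotLin i j θ y⟫ = ⟪x, y⟫ := by
  rw [real_inner_comm (rotLin i j θ y) (rotLin i j θ x), real_inner_comm y x]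
  simp only [PiLp.inner_apply, RCLike.inner_apply, conj_trivial]
  rw [sum_split i j hij, sum_split i j hij (fun k => x k * y k)]
  have hx : ∀ k, k ≠ i → k ≠ j → rotLin i j θ x k = x k := by
    intro k hki hkj
    simp only [rotLin, LinearMap.coe_mk, AddHom.coe_mk, rotFun, PiLp.toLp_apply, if_neg hki, if_neg hkj]
  have hsum : ∑ k ∈ (Finset.univ.erase i).erase j, rotLin i j θ x k * rotLin i j θ y k
      = ∑ k ∈ (Finset.univ.erase i).erase j, x k * y k := by
    refine Finset.sum_congr rfl fun k hk => ?_
    rw [Finset.mem_erase, Finset.mem_erase] at hk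
    rw [hx k hk.2.1 hk.1, show rotLin i j θ y k = y k from by
      simp only [rotLin, LinearMap.coe_mk, AddHom.coe_mk, rotFun, PiLp.toLp_apply, if_neg hk.2.1, if_neg hk.1]]
  rw [hsum]
  have hxi : rotLin i j θ x i = Real.cos θ * x i - Real.sin θ * x j := by
    simp only [rotLin, LinearMap.coe_mk, AddHom.coe_mk, rotFun]; simp [hij.symm]
  have hxj : rotLin i j θ x j = Real.sin θ * x i + Real.cos θ * x j := by
    simp only [rotLin, LinearMap.coe_mk, AddHom.coe_mk, rotFun]; simp [hij.symm]
  have hyi : rotLin i j θ y i = Real.cos θ * y i - Real.sin θ * y j := by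
    simp only [rotLin, LinearMap.coe_mk, AddHom.coe_mk, rotFun]; simp [hij.symm]
  have hyj : rotLin i j θ y j = Real.sin θ * y i + Real.cos θ * y j := by
    simp only [rotLin, LinearMap.coe_mk, AddHom.coe_mk, rotFun]; simp [hij.symm]
  rw [hxi, hxj, hyi, hyj]
  have := Real.sin_sq_add_cos_sq θ
  linear_combination (x i * y i + x j * y j) * this

/-- The rotation as a linear isometry equivalence. -/
def rotIso (i j : Fin d) (hij : i ≠ j) (θ : ℝ) :
    EuclideanSpace ℝ (Fin d) ≃ₗᵢ[ℝ] EuclideanSpace ℝ (Fin d) :=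
  LinearIsometry.toLinearIsometryEquiv
    ((rotLin i j θ).isometryOfInner (rot_inner i j hij θ)) rfl

lemma rotIso_apply (i j : Fin d) (hij : i ≠ j) (θ : ℝ) (x : EuclideanSpace ℝ (Fin d)) :
    rotIso i j hij θ x = rotFun i j θ x := rfl

end RotAux

section KeyLemma

variable {d : ℕ}

lemma coord_le_norm (x : EuclideanSpace ℝ (Fin d)) (k : Fin d) : |x k| ≤ ‖x‖ := by
  have h := abs_real_inner_le_norm (EuclideanSpace.single k (1:ℝ)) x
  simpa [EuclideanSpace.inner_single_left, EuclideanSpace.norm_single] using h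

lemma rotFun_eq_curve (i j : Fin d) (hij : i ≠ j) (θ : ℝ) (x : EuclideanSpace ℝ (Fin d)) :
    rotFun i j θ x
      = x + ((Real.cos θ - 1) * x i - Real.sin θ * x j) • EuclideanSpace.single i (1:ℝ)
          + (Real.sin θ * x i + (Real.cos θ - 1) * x j) • EuclideanSpace.single j (1:ℝ) := by
  ext k
  rcases eq_or_ne k i with hk | hk
  · subst hk
    simp only [rotFun, PiLp.toLp_apply, PiLp.add_apply, PiLp.smul_apply, EuclideanSpace.single_apply,
      smul_eq_mul, if_pos rfl, if_neg hij, if_true]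
    ring
  · rcases eq_or_ne k j with hk2 | hk2
    · subst hk2
      simp only [rotFun, PiLp.toLp_apply, PiLp.add_apply, PiLp.smul_apply, EuclideanSpace.single_apply,
        smul_eq_mul, if_pos rfl, if_neg hij.symm, if_neg hk, if_true]
      ring
    · simp only [rotFun, PiLp.toLp_apply, PiLp.add_apply, PiLp.smul_apply, EuclideanSpace.single_apply,
        smul_eq_mul, if_neg hk, if_neg hk2]
      ring

lemma rotFun_zero (i j : Fin d) (x : EuclideanSpace ℝ (Fin d)) : rotFun i j 0 x = x := by
  ext k
  simp only [rotFun, PiLp.toLp_apply, Real.cos_zero, Real.sin_zero, one_mul, zero_mul, sub_zero, add_zero,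
    zero_add]
  rcases eq_or_ne k i with hk | hk
  · subst hk; rw [if_pos rfl]
  · rcases eq_or_ne k j with hk2 | hk2
    · subst hk2; rw [if_neg hk, if_pos rfl]
    · rw [if_neg hk, if_neg hk2]

lemma hasDerivAt_rot (i j : Fin d) (hij : i ≠ j) (x : EuclideanSpace ℝ (Fin d)) (θ : ℝ) :
    HasDerivAt (fun t => rotIso i j hij t x)
      ((-Real.sin θ * x i - Real.cos θ * x j) • EuclideanSpace.single i (1:ℝ)
        + (Real.cos θ * x i + -Real.sin θ * x j) • EuclideanSpace.single j (1:ℝ)) θ := by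
  have hfun : (fun t => rotIso i j hij t x)
      = fun t => x + ((Real.cos t - 1) * x i - Real.sin t * x j) • EuclideanSpace.single i (1:ℝ)
          + (Real.sin t * x i + (Real.cos t - 1) * x j) • EuclideanSpace.single j (1:ℝ) := by
    funext t; rw [rotIso_apply, rotFun_eq_curve i j hij]
  rw [hfun]
  have h1 : HasDerivAt (fun t => (Real.cos t - 1) * x i - Real.sin t * x j)
      (-Real.sin θ * x i - Real.cos θ * x j) θ :=
    (((Real.hasDerivAt_cos θ).sub_const 1).mul_const (x i)).sub
      ((Real.hasDerivAt_sin θ).mul_const (x j))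
  have h2 : HasDerivAt (fun t => Real.sin t * x i + (Real.cos t - 1) * x j)
      (Real.cos θ * x i + -Real.sin θ * x j) θ :=
    ((Real.hasDerivAt_sin θ).mul_const (x i)).add
      (((Real.hasDerivAt_cos θ).sub_const 1).mul_const (x j))
  exact ((h1.smul_const _).const_add x).add (h2.smul_const _)

lemma integrable_of_continuous {X : Type*} [NormedAddCommGroup X]
    (ν : Measure (EuclideanSpace ℝ (Fin d))) (hν : IsUniformSphereMeasure ν)
    (f : EuclideanSpace ℝ (Fin d) → X) (hf : Continuous f) : Integrable f ν := by
  haveI := hν.1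
  obtain ⟨C, hC⟩ := (isCompact_sphere (0 : EuclideanSpace ℝ (Fin d)) 1)
    |>.exists_bound_of_continuousOn hf.continuousOn
  have hae : ∀ᵐ v ∂ν, v ∈ Metric.sphere (0 : EuclideanSpace ℝ (Fin d)) 1 := by
    rw [MeasureTheory.ae_iff]
    have hset : {a : EuclideanSpace ℝ (Fin d) | ¬ a ∈ Metric.sphere (0 : EuclideanSpace ℝ (Fin d)) 1}
        = (Metric.sphere (0 : EuclideanSpace ℝ (Fin d)) 1)ᶜ := rfl
    rw [hset]; exact hν.2.1
  exact (integrable_const C).mono' hf.aestronglyMeasurable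
    (hae.mono fun v hv => hC v hv)

lemma ae_sphere (ν : Measure (EuclideanSpace ℝ (Fin d))) (hν : IsUniformSphereMeasure ν) :
    ∀ᵐ v ∂ν, ‖v‖ = 1 := by
  have : ∀ᵐ v ∂ν, v ∈ Metric.sphere (0 : EuclideanSpace ℝ (Fin d)) 1 := by
    rw [MeasureTheory.ae_iff]
    have hset : {a : EuclideanSpace ℝ (Fin d) | ¬ a ∈ Metric.sphere (0 : EuclideanSpace ℝ (Fin d)) 1}
        = (Metric.sphere (0 : EuclideanSpace ℝ (Fin d)) 1)ᶜ := rfl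
    rw [hset]; exact hν.2.1
  exact this.mono fun v hv => by simpa [Metric.mem_sphere, dist_zero_right] using hv

end KeyLemma

section Key2

variable {d : ℕ}

lemma coord_continuous (k : Fin d) : Continuous (fun v : EuclideanSpace ℝ (Fin d) => v k) :=
  (EuclideanSpace.proj k).continuous

lemma key_rot (ν : Measure (EuclideanSpace ℝ (Fin d))) (hν : IsUniformSphereMeasure ν)
    (i j : Fin d) (hij : i ≠ j) (φ : EuclideanSpace ℝ (Fin d) → ℝ) (hφ : ContDiff ℝ 1 φ) :
    ∫ v, (v i * fderiv ℝ φ v (EuclideanSpace.single j (1:ℝ))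
        - v j * fderiv ℝ φ v (EuclideanSpace.single i (1:ℝ))) ∂ν = 0 := by
  haveI := hν.1
  set R : ℝ → EuclideanSpace ℝ (Fin d) ≃ₗᵢ[ℝ] EuclideanSpace ℝ (Fin d) :=
    fun t => rotIso i j hij t with hR
  set ω : ℝ → EuclideanSpace ℝ (Fin d) → EuclideanSpace ℝ (Fin d) := fun t v =>
    (-Real.sin t * v i - Real.cos t * v j) • EuclideanSpace.single i (1:ℝ)
      + (Real.cos t * v i + -Real.sin t * v j) • EuclideanSpace.single j (1:ℝ) with hω
  set F' : ℝ → EuclideanSpace ℝ (Fin d) → ℝ := fun t v => fderiv ℝ φ (R t v) (ω t v) with hF'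
  obtain ⟨C, hC⟩ := (isCompact_sphere (0 : EuclideanSpace ℝ (Fin d)) 1)
    |>.exists_bound_of_continuousOn (hφ.continuous_fderiv one_ne_zero).continuousOn
  have hmeas : ∀ᶠ t in nhds (0:ℝ), AEStronglyMeasurable (fun v => φ (R t v)) ν :=
    Filter.Eventually.of_forall fun t =>
      (hφ.continuous.comp (R t).continuous).aestronglyMeasurable
  have hR0 : ∀ v, R 0 v = v := fun v => by rw [hR]; rw [rotIso_apply, rotFun_zero]
  have hint : Integrable (fun v => φ (R 0 v)) ν := by
    have h : (fun v => φ (R 0 v)) = φ := funext fun v => by rw [hR0]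
    rw [h]; exact integrable_of_continuous ν hν φ hφ.continuous
  have hcont : ∀ t, Continuous (F' t) := by
    intro t
    apply Continuous.clm_apply ((hφ.continuous_fderiv one_ne_zero).comp (R t).continuous)
    exact (((continuous_const.mul (coord_continuous i)).sub
        (continuous_const.mul (coord_continuous j))).smul continuous_const).add
      (((continuous_const.mul (coord_continuous i)).add
        (continuous_const.mul (coord_continuous j))).smul continuous_const)
  have h_bound : ∀ᵐ v ∂ν, ∀ t ∈ Metric.ball (0:ℝ) 1, ‖F' t v‖ ≤ max C 0 * 4 := by
    refine (ae_sphere ν hν).mono fun v hv t _ => ?_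
    have h1 : ‖F' t v‖ ≤ ‖fderiv ℝ φ (R t v)‖ * ‖ω t v‖ :=
      ContinuousLinearMap.le_opNorm _ _
    have h2 : ‖fderiv ℝ φ (R t v)‖ ≤ max C 0 := by
      refine le_max_of_le_left (hC _ ?_)
      simp [Metric.mem_sphere, dist_zero_right, (R t).norm_map, hv]
    have hvi : |v i| ≤ 1 := hv ▸ coord_le_norm v i
    have hvj : |v j| ≤ 1 := hv ▸ coord_le_norm v j
    have h3 : ‖ω t v‖ ≤ 4 := by
      rw [hω]
      refine le_trans (norm_add_le _ _) ?_
      rw [norm_smul, norm_smul, EuclideanSpace.norm_single, EuclideanSpace.norm_single]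
      have ha : ‖-Real.sin t * v i - Real.cos t * v j‖ ≤ 2 := by
        rw [Real.norm_eq_abs]
        refine le_trans (abs_sub _ _) ?_
        rw [abs_mul, abs_mul, abs_neg]
        nlinarith [Real.abs_sin_le_one t, Real.abs_cos_le_one t, abs_nonneg (v i),
          abs_nonneg (v j), abs_nonneg (Real.sin t), abs_nonneg (Real.cos t)]
      have hb : ‖Real.cos t * v i + -Real.sin t * v j‖ ≤ 2 := by
        rw [Real.norm_eq_abs]
        refine le_trans (abs_add_le _ _) ?_
        rw [abs_mul, abs_mul, abs_neg]
        nlinarith [Real.abs_sin_le_one t, Real.abs_cos_le_one t, abs_nonneg (v i),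
          abs_nonneg (v j), abs_nonneg (Real.sin t), abs_nonneg (Real.cos t)]
      have h1 : ‖(1:ℝ)‖ = 1 := by norm_num
      rw [h1]
      linarith
    calc ‖F' t v‖ ≤ ‖fderiv ℝ φ (R t v)‖ * ‖ω t v‖ := h1
      _ ≤ max C 0 * 4 := by
          apply mul_le_mul h2 h3 (norm_nonneg _) (le_max_right C 0)
  have h_diff : ∀ᵐ v ∂ν, ∀ t ∈ Metric.ball (0:ℝ) 1,
      HasDerivAt (fun t => φ (R t v)) (F' t v) t := by
    refine Filter.Eventually.of_forall fun v t _ => ?_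
    exact HasFDerivAt.comp_hasDerivAt t
      ((hφ.differentiable one_ne_zero) (R t v)).hasFDerivAt (hasDerivAt_rot i j hij v t)
  have hmain := hasDerivAt_integral_of_dominated_loc_of_deriv_le
    (Metric.ball_mem_nhds 0 (by norm_num : (0:ℝ) < 1))
    hmeas hint ((hcont 0).aestronglyMeasurable) h_bound (integrable_const _) h_diff
  have h2 := hmain.2
  have hconstfun : (fun t => ∫ v, φ (R t v) ∂ν) = fun _ => ∫ v, φ v ∂ν := by
    funext t
    calc ∫ v, φ (R t v) ∂ν = ∫ v, φ v ∂(ν.map (R t)) :=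
          (integral_map (R t).continuous.aemeasurable hφ.continuous.aestronglyMeasurable).symm
      _ = ∫ v, φ v ∂ν := by rw [hν.2.2 (R t)]
  rw [hconstfun] at h2
  have h0 : ∫ v, F' 0 v ∂ν = 0 := h2.unique (hasDerivAt_const 0 _)
  rw [← h0]
  refine integral_congr_ae (Filter.Eventually.of_forall fun v => ?_)
  show _ = fderiv ℝ φ (R 0 v) (ω 0 v)
  rw [hR0 v, hω]
  simp only [Real.cos_zero, Real.sin_zero, neg_zero, zero_mul, one_mul, zero_sub, add_zero,
    map_add, ContinuousLinearMap.map_smul, smul_eq_mul, mul_zero, neg_mul, zero_add]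
  ring

end Key2

section DivId

variable {d : ℕ}

lemma decomp (v : EuclideanSpace ℝ (Fin d)) :
    v = ∑ j, v j • EuclideanSpace.single j (1:ℝ) := by
  have hb := (EuclideanSpace.basisFun (Fin d) ℝ).sum_repr v
  simp only [EuclideanSpace.basisFun_repr, EuclideanSpace.basisFun_apply] at hb
  exact hb.symm

lemma clm_decomp (v : EuclideanSpace ℝ (Fin d)) (T : EuclideanSpace ℝ (Fin d) →L[ℝ] ℝ) :
    T v = ∑ j, v j * T (EuclideanSpace.single j (1:ℝ)) := by
  conv_lhs => rw [decomp v]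
  rw [map_sum]
  exact Finset.sum_congr rfl fun j _ => by rw [ContinuousLinearMap.map_smul, smul_eq_mul]

lemma norm_sq_decomp (v : EuclideanSpace ℝ (Fin d)) : ∑ j, v j * v j = ‖v‖ ^ 2 := by
  rw [← real_inner_self_eq_norm_sq]
  simp only [PiLp.inner_apply, RCLike.inner_apply, conj_trivial]

lemma div_id (ν : Measure (EuclideanSpace ℝ (Fin d))) (hν : IsUniformSphereMeasure ν)
    (hd : 2 ≤ d) (h : EuclideanSpace ℝ (Fin d) → ℝ) (hh : ContDiff ℝ 1 h) (i : Fin d) :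
    ∫ v, (fderiv ℝ h v (EuclideanSpace.single i (1:ℝ)) - v i * fderiv ℝ h v v) ∂ν
      = ((d:ℝ) - 1) * ∫ v, v i * h v ∂ν := by
  haveI := hν.1
  have hDcont : Continuous fun v => fderiv ℝ h v := hh.continuous_fderiv one_ne_zero
  have hfd : ∀ (j : Fin d) (v u : EuclideanSpace ℝ (Fin d)),
      fderiv ℝ (fun w => h w * w j) v u = h v * u j + v j * fderiv ℝ h v u := by
    intro j v u
    have hproj : HasFDerivAt (fun w : EuclideanSpace ℝ (Fin d) => w j)
        (EuclideanSpace.proj j : EuclideanSpace ℝ (Fin d) →L[ℝ] ℝ) v :=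
      (EuclideanSpace.proj j : EuclideanSpace ℝ (Fin d) →L[ℝ] ℝ).hasFDerivAt
    have h1 : HasFDerivAt (fun w : EuclideanSpace ℝ (Fin d) => h w * w j)
        (h v • (EuclideanSpace.proj j : EuclideanSpace ℝ (Fin d) →L[ℝ] ℝ)
          + v j • fderiv ℝ h v) v :=
      ((hh.differentiable one_ne_zero) v).hasFDerivAt.mul hproj
    rw [h1.fderiv]
    simp [ContinuousLinearMap.add_apply, ContinuousLinearMap.smul_apply, smul_eq_mul]
  have hφC : ∀ j : Fin d, ContDiff ℝ 1 (fun w : EuclideanSpace ℝ (Fin d) => h w * w j) :=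
    fun j => hh.mul (EuclideanSpace.proj j : EuclideanSpace ℝ (Fin d) →L[ℝ] ℝ).contDiff
  set f : Fin d → EuclideanSpace ℝ (Fin d) → ℝ := fun j v =>
    v i * h v + v i * v j * fderiv ℝ h v (EuclideanSpace.single j (1:ℝ))
      - v j * v j * fderiv ℝ h v (EuclideanSpace.single i (1:ℝ)) with hf
  have hfint : ∀ j, Integrable (f j) ν := by
    intro j
    apply integrable_of_continuous ν hν
    refine (((coord_continuous i).mul hh.continuous).add
      (((coord_continuous i).mul (coord_continuous j)).mul
        (hDcont.clm_apply continuous_const))).sub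
      (((coord_continuous j).mul (coord_continuous j)).mul (hDcont.clm_apply continuous_const))
  have hA : ∀ j ∈ Finset.univ.erase i, ∫ v, f j v ∂ν = 0 := by
    intro j hj
    have hij : i ≠ j := fun hh' => (Finset.mem_erase.1 hj).1 hh'.symm
    have hK := key_rot ν hν i j hij (fun w => h w * w j) (hφC j)
    rw [← hK]
    refine integral_congr_ae (Filter.Eventually.of_forall fun v => ?_)
    rw [hf]
    simp only [hfd, EuclideanSpace.single_apply, if_pos rfl, if_neg hij.symm, if_true,
      mul_one, mul_zero]
    ring
  have hsum0 : ∫ v, ∑ j ∈ Finset.univ.erase i, f j v ∂ν = 0 := by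
    rw [integral_finset_sum _ (fun j _ => hfint j)]
    exact Finset.sum_eq_zero hA
  have hpt : ∀ᵐ v ∂ν, ∑ j ∈ Finset.univ.erase i, f j v
      = ((d:ℝ) - 1) * (v i * h v)
        + (v i * fderiv ℝ h v v - fderiv ℝ h v (EuclideanSpace.single i (1:ℝ))) := by
    refine (ae_sphere ν hν).mono fun v hv => ?_
    have hcard : ((Finset.univ.erase i).card : ℝ) = (d:ℝ) - 1 := by
      rw [Finset.card_erase_of_mem (Finset.mem_univ i)]
      simp only [Finset.card_univ, Fintype.card_fin]
      have h1 : 1 ≤ d := le_trans one_le_two hd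
      push_cast [Nat.cast_sub h1]
      ring
    have e1 : ∑ j ∈ Finset.univ.erase i, (v i * h v) = ((d:ℝ) - 1) * (v i * h v) := by
      rw [Finset.sum_const, nsmul_eq_mul, hcard]
    have hs : (∑ j ∈ Finset.univ.erase i,
        v j * fderiv ℝ h v (EuclideanSpace.single j (1:ℝ)))
        + v i * fderiv ℝ h v (EuclideanSpace.single i (1:ℝ)) = fderiv ℝ h v v := by
      rw [clm_decomp v (fderiv ℝ h v)]
      exact Finset.sum_erase_add Finset.univ _ (Finset.mem_univ i)
    have e2 : ∑ j ∈ Finset.univ.erase i,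
        v i * v j * fderiv ℝ h v (EuclideanSpace.single j (1:ℝ))
        = v i * (fderiv ℝ h v v
            - v i * fderiv ℝ h v (EuclideanSpace.single i (1:ℝ))) := by
      have e2' : ∑ j ∈ Finset.univ.erase i,
          v i * v j * fderiv ℝ h v (EuclideanSpace.single j (1:ℝ))
          = v i * ∑ j ∈ Finset.univ.erase i,
              v j * fderiv ℝ h v (EuclideanSpace.single j (1:ℝ)) := by
        rw [Finset.mul_sum]
        exact Finset.sum_congr rfl fun j _ => by ring
      rw [e2']
      have e2'' : ∑ j ∈ Finset.univ.erase i,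
          v j * fderiv ℝ h v (EuclideanSpace.single j (1:ℝ))
          = fderiv ℝ h v v - v i * fderiv ℝ h v (EuclideanSpace.single i (1:ℝ)) := by
        linarith [hs]
      rw [e2'']
    have hs3 : (∑ j ∈ Finset.univ.erase i, v j * v j) + v i * v i = 1 := by
      have h4 : (∑ j ∈ Finset.univ.erase i, v j * v j) + v i * v i = ∑ j, v j * v j :=
        Finset.sum_erase_add Finset.univ _ (Finset.mem_univ i)
      rw [h4, norm_sq_decomp v, hv, one_pow]
    have e3 : ∑ j ∈ Finset.univ.erase i,
        v j * v j * fderiv ℝ h v (EuclideanSpace.single i (1:ℝ))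
        = (1 - v i * v i) * fderiv ℝ h v (EuclideanSpace.single i (1:ℝ)) := by
      rw [← Finset.sum_mul]
      have e3' : ∑ j ∈ Finset.univ.erase i, v j * v j = 1 - v i * v i := by linarith [hs3]
      rw [e3']
    calc ∑ j ∈ Finset.univ.erase i, f j v
        = (∑ j ∈ Finset.univ.erase i, (v i * h v))
          + (∑ j ∈ Finset.univ.erase i,
              v i * v j * fderiv ℝ h v (EuclideanSpace.single j (1:ℝ)))
          - ∑ j ∈ Finset.univ.erase i,
              v j * v j * fderiv ℝ h v (EuclideanSpace.single i (1:ℝ)) := by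
          rw [hf, ← Finset.sum_add_distrib, ← Finset.sum_sub_distrib]
      _ = ((d:ℝ) - 1) * (v i * h v)
          + (v i * fderiv ℝ h v v - fderiv ℝ h v (EuclideanSpace.single i (1:ℝ))) := by
          rw [e1, e2, e3]; ring
  have hint1 : Integrable (fun v => v i * h v) ν :=
    integrable_of_continuous ν hν _ ((coord_continuous i).mul hh.continuous)
  have hint2 : Integrable (fun v =>
      v i * fderiv ℝ h v v - fderiv ℝ h v (EuclideanSpace.single i (1:ℝ))) ν :=
    integrable_of_continuous ν hν _
      (((coord_continuous i).mul (hDcont.clm_apply continuous_id)).sub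
        (hDcont.clm_apply continuous_const))
  have hsum0' : ∫ v, (((d:ℝ) - 1) * (v i * h v)
      + (v i * fderiv ℝ h v v - fderiv ℝ h v (EuclideanSpace.single i (1:ℝ)))) ∂ν = 0 := by
    rw [← integral_congr_ae hpt]
    exact hsum0
  rw [integral_add (hint1.const_mul _) hint2, integral_const_mul] at hsum0'
  have : ∫ v, (fderiv ℝ h v (EuclideanSpace.single i (1:ℝ)) - v i * fderiv ℝ h v v) ∂ν
      = - ∫ v, (v i * fderiv ℝ h v v - fderiv ℝ h v (EuclideanSpace.single i (1:ℝ))) ∂ν := by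
    rw [← integral_neg]
    exact integral_congr_ae (Filter.Eventually.of_forall fun v => by ring)
  rw [this]
  linarith [hsum0']

end DivId

section Param

variable {d : ℕ}

lemma comp_inl_norm_le (D : (EuclideanSpace ℝ (Fin d) × EuclideanSpace ℝ (Fin d)) →L[ℝ] ℝ) :
    ‖D.comp (ContinuousLinearMap.inl ℝ (EuclideanSpace ℝ (Fin d)) (EuclideanSpace ℝ (Fin d)))‖
      ≤ ‖D‖ := by
  refine ContinuousLinearMap.opNorm_le_bound _ (norm_nonneg D) fun u => ?_
  have h1 : ‖(ContinuousLinearMap.inl ℝ (EuclideanSpace ℝ (Fin d))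
      (EuclideanSpace ℝ (Fin d))) u‖ ≤ ‖u‖ := by
    rw [ContinuousLinearMap.inl_apply]
    rw [Prod.norm_def]
    simp [norm_nonneg]
  calc ‖D _‖ ≤ ‖D‖ * ‖_‖ := D.le_opNorm _
    _ ≤ ‖D‖ * ‖u‖ := by exact mul_le_mul_of_nonneg_left h1 (norm_nonneg D)

lemma slice_hasFDerivAt (g : EuclideanSpace ℝ (Fin d) × EuclideanSpace ℝ (Fin d) → ℝ)
    (hg : ContDiff ℝ 1 g) (x v : EuclideanSpace ℝ (Fin d)) :
    HasFDerivAt (fun x => g (x, v))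
      ((fderiv ℝ g (x, v)).comp
        (ContinuousLinearMap.inl ℝ (EuclideanSpace ℝ (Fin d)) (EuclideanSpace ℝ (Fin d)))) x :=
  ((hg.differentiable one_ne_zero) (x, v)).hasFDerivAt.comp x (hasFDerivAt_prodMk_left x v)

set_option maxHeartbeats 1000000 in
lemma fderiv_under_integral (ν : Measure (EuclideanSpace ℝ (Fin d)))
    (hν : IsUniformSphereMeasure ν)
    (g : EuclideanSpace ℝ (Fin d) × EuclideanSpace ℝ (Fin d) → ℝ) (hg : ContDiff ℝ 1 g)
    (ξ : EuclideanSpace ℝ (Fin d)) (i : Fin d) :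
    HasFDerivAt (fun x => ∫ v, g (x, v) * v i ∂ν)
      (∫ v, (v i) • ((fderiv ℝ g (ξ, v)).comp
        (ContinuousLinearMap.inl ℝ (EuclideanSpace ℝ (Fin d)) (EuclideanSpace ℝ (Fin d)))) ∂ν)
      ξ := by
  haveI := hν.1
  set F' : EuclideanSpace ℝ (Fin d) → EuclideanSpace ℝ (Fin d) →
      (EuclideanSpace ℝ (Fin d) →L[ℝ] ℝ) := fun x v =>
    (v i) • ((fderiv ℝ g (x, v)).comp
      (ContinuousLinearMap.inl ℝ (EuclideanSpace ℝ (Fin d)) (EuclideanSpace ℝ (Fin d)))) with hF'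
  have hDgcont : Continuous fun p => fderiv ℝ g p := hg.continuous_fderiv one_ne_zero
  obtain ⟨C, hC⟩ := ((isCompact_closedBall ξ 1).prod
      (isCompact_sphere (0 : EuclideanSpace ℝ (Fin d)) 1)).exists_bound_of_continuousOn
    hDgcont.continuousOn
  have hmeas : ∀ᶠ x in nhds ξ, AEStronglyMeasurable (fun v => g (x, v) * v i) ν :=
    Filter.Eventually.of_forall fun x =>
      ((hg.continuous.comp (Continuous.prodMk_right x)).mul (coord_continuous i)).aestronglyMeasurable
  have hint : Integrable (fun v => g (ξ, v) * v i) ν :=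
    integrable_of_continuous ν hν _
      ((hg.continuous.comp (Continuous.prodMk_right ξ)).mul (coord_continuous i))
  have hF'cont : Continuous (F' ξ) := by
    rw [hF']
    refine (coord_continuous i).smul ?_
    have h1 : Continuous fun v =>
        (ContinuousLinearMap.compL ℝ (EuclideanSpace ℝ (Fin d))
          (EuclideanSpace ℝ (Fin d) × EuclideanSpace ℝ (Fin d)) ℝ) (fderiv ℝ g (ξ, v)) :=
      (ContinuousLinearMap.compL ℝ (EuclideanSpace ℝ (Fin d))
          (EuclideanSpace ℝ (Fin d) × EuclideanSpace ℝ (Fin d)) ℝ).continuous.comp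
        (hDgcont.comp (Continuous.prodMk_right ξ))
    exact h1.clm_apply continuous_const
  have h_bound : ∀ᵐ v ∂ν, ∀ x ∈ Metric.ball ξ 1, ‖F' x v‖ ≤ max C 0 := by
    refine (ae_sphere ν hν).mono fun v hv x hx => ?_
    have hmem : (x, v) ∈ Metric.closedBall ξ 1 ×ˢ
        Metric.sphere (0 : EuclideanSpace ℝ (Fin d)) 1 := by
      constructor
      · exact Metric.ball_subset_closedBall hx
      · simpa [Metric.mem_sphere, dist_zero_right] using hv
    have h1 : ‖fderiv ℝ g (x, v)‖ ≤ max C 0 := le_max_of_le_left (hC _ hmem)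
    have hvi : |v i| ≤ 1 := hv ▸ coord_le_norm v i
    rw [hF']
    refine ContinuousLinearMap.opNorm_le_bound _ (le_max_right C 0) fun u => ?_
    rw [ContinuousLinearMap.smul_apply, smul_eq_mul]
    have h3 : ‖((fderiv ℝ g (x, v)).comp
        (ContinuousLinearMap.inl ℝ (EuclideanSpace ℝ (Fin d)) (EuclideanSpace ℝ (Fin d)))) u‖
        ≤ max C 0 * ‖u‖ :=
      le_trans (ContinuousLinearMap.le_opNorm _ _)
        (mul_le_mul_of_nonneg_right (le_trans (comp_inl_norm_le _) h1) (norm_nonneg u))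
    calc ‖v i * ((fderiv ℝ g (x, v)).comp
          (ContinuousLinearMap.inl ℝ (EuclideanSpace ℝ (Fin d)) (EuclideanSpace ℝ (Fin d)))) u‖
        = |v i| * ‖((fderiv ℝ g (x, v)).comp
          (ContinuousLinearMap.inl ℝ (EuclideanSpace ℝ (Fin d)) (EuclideanSpace ℝ (Fin d)))) u‖ := by
          rw [norm_mul, Real.norm_eq_abs]
      _ ≤ 1 * (max C 0 * ‖u‖) :=
          mul_le_mul hvi h3 (norm_nonneg _) zero_le_one
      _ = max C 0 * ‖u‖ := one_mul _
  have h_diff : ∀ᵐ v ∂ν, ∀ x ∈ Metric.ball ξ 1,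
      HasFDerivAt (fun x => g (x, v) * v i) (F' x v) x := by
    refine Filter.Eventually.of_forall fun v x _ => ?_
    have := (slice_hasFDerivAt g hg x v).mul_const (v i)
    simpa [hF', smul_smul, mul_comm] using this
  exact hasFDerivAt_integral_of_dominated_of_fderiv_le
    (Metric.ball_mem_nhds ξ (by norm_num : (0:ℝ) < 1))
    hmeas hint hF'cont.aestronglyMeasurable h_bound (integrable_const _) h_diff

end Param

section Main

lemma inner_gradient {d : ℕ} (f : EuclideanSpace ℝ (Fin d) → ℝ) (x u : EuclideanSpace ℝ (Fin d)) :
    ⟪u, gradient f x⟫ = fderiv ℝ f x u := by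
  rw [real_inner_comm]
  exact InnerProductSpace.toDual_symm_apply

lemma slice2_hasFDerivAt {d : ℕ} (g : EuclideanSpace ℝ (Fin d) × EuclideanSpace ℝ (Fin d) → ℝ)
    (hg : ContDiff ℝ 1 g) (x v : EuclideanSpace ℝ (Fin d)) :
    ContDiff ℝ 1 (fun u : EuclideanSpace ℝ (Fin d) => g (x, u)) :=
  hg.comp (contDiff_const.prodMk contDiff_id)

/-- The formula `(AΠ)* g = -Π A g = (∇_ξ - ∇_ξ Φ) ⬝ ∫_{S^{d-1}} v g dν` from the
hypocoercivity proof: for `d ≥ 2`, `Φ` and `g` of class `C¹`, and every `ξ ∈ ℝ^d`,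
`-∫_{S^{d-1}} (A g)(ξ, v) dν(v)
   = ∑_{i=1}^d ∂_{ξ_i} (∫_{S^{d-1}} v_i g(ξ,v) dν(v)) - ⟨∇Φ(ξ), ∫_{S^{d-1}} v g(ξ,v) dν(v)⟩`. -/
theorem transport_operator_projected_adjoint
    (d : ℕ) (hd : 2 ≤ d)
    (ν : Measure (EuclideanSpace ℝ (Fin d))) (hν : IsUniformSphereMeasure ν)
    (Φ : EuclideanSpace ℝ (Fin d) → ℝ) (hΦ : ContDiff ℝ 1 Φ)
    (g : EuclideanSpace ℝ (Fin d) × EuclideanSpace ℝ (Fin d) → ℝ) (hg : ContDiff ℝ 1 g)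
    (ξ : EuclideanSpace ℝ (Fin d)) :
    -∫ v, transportOp d Φ g (ξ, v) ∂ν
      = (∑ i : Fin d,
          fderiv ℝ (fun x => ∫ v, g (x, v) * v i ∂ν) ξ (EuclideanSpace.single i (1 : ℝ)))
        - ⟪gradient Φ ξ, ∫ v, g (ξ, v) • v ∂ν⟫ := by
  haveI := hν.1
  classical
  have hgslice : ContDiff ℝ 1 (fun u : EuclideanSpace ℝ (Fin d) => g (ξ, u)) :=
    hg.comp (contDiff_const.prodMk contDiff_id)
  set w : EuclideanSpace ℝ (Fin d) := gradient Φ ξ with hw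
  set D : EuclideanSpace ℝ (Fin d) → EuclideanSpace ℝ (Fin d) →L[ℝ] ℝ :=
    fun v => fderiv ℝ (fun u => g (ξ, u)) v with hD
  set T : EuclideanSpace ℝ (Fin d) → EuclideanSpace ℝ (Fin d) →L[ℝ] ℝ :=
    fun v => (fderiv ℝ g (ξ, v)).comp
      (ContinuousLinearMap.inl ℝ (EuclideanSpace ℝ (Fin d)) (EuclideanSpace ℝ (Fin d))) with hT
  have hDcont : Continuous D := hgslice.continuous_fderiv one_ne_zero
  have hTcont : Continuous T := by
    rw [hT]
    have h1 : Continuous fun v =>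
        (ContinuousLinearMap.compL ℝ (EuclideanSpace ℝ (Fin d))
          (EuclideanSpace ℝ (Fin d) × EuclideanSpace ℝ (Fin d)) ℝ) (fderiv ℝ g (ξ, v)) :=
      (ContinuousLinearMap.compL ℝ (EuclideanSpace ℝ (Fin d))
          (EuclideanSpace ℝ (Fin d) × EuclideanSpace ℝ (Fin d)) ℝ).continuous.comp
        ((hg.continuous_fderiv one_ne_zero).comp (Continuous.prodMk_right ξ))
    exact h1.clm_apply continuous_const
  -- pointwise form of the transport operator
  have hpt : ∀ v, transportOp d Φ g (ξ, v)
      = -(T v v) + (1 / ((d:ℝ) - 1)) * (D v w - ⟪w, v⟫ * D v v) := by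
    intro v
    have h1 : ⟪v, gradient (fun x => g (x, v)) ξ⟫ = T v v := by
      rw [inner_gradient, (slice_hasFDerivAt g hg ξ v).fderiv]
    have h2 : ⟪w - ⟪w, v⟫ • v, gradient (fun u => g (ξ, u)) v⟫
        = D v w - ⟪w, v⟫ * D v v := by
      rw [inner_sub_left, real_inner_smul_left, inner_gradient, inner_gradient]
    rw [transportOp]
    rw [show ((ξ, v) : EuclideanSpace ℝ (Fin d) × EuclideanSpace ℝ (Fin d)).1 = ξ from rfl]
    rw [show ((ξ, v) : EuclideanSpace ℝ (Fin d) × EuclideanSpace ℝ (Fin d)).2 = v from rfl]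
    rw [h1, ← hw, h2]
  -- integrabilities
  have hintT : Integrable (fun v => T v v) ν :=
    integrable_of_continuous ν hν _ (hTcont.clm_apply continuous_id)
  have hintP2 : Integrable (fun v => D v w - ⟪w, v⟫ * D v v) ν := by
    refine integrable_of_continuous ν hν _ ?_
    exact ((hDcont.clm_apply continuous_const).sub
      ((continuous_const.inner continuous_id).mul (hDcont.clm_apply continuous_id)))
  have hsplit : ∫ v, transportOp d Φ g (ξ, v) ∂ν
      = -∫ v, T v v ∂ν + (1/((d:ℝ)-1)) * ∫ v, (D v w - ⟪w, v⟫ * D v v) ∂ν := by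
    have h1 : ∫ v, transportOp d Φ g (ξ, v) ∂ν
        = ∫ v, (-(T v v) + (1/((d:ℝ)-1)) * (D v w - ⟪w, v⟫ * D v v)) ∂ν :=
      integral_congr_ae (Filter.Eventually.of_forall hpt)
    have hneg : Integrable (fun v => -(T v v)) ν := hintT.neg
    have hmul : Integrable (fun v => (1/((d:ℝ)-1)) * (D v w - ⟪w, v⟫ * D v v)) ν :=
      hintP2.const_mul _
    rw [h1, integral_add hneg hmul, integral_neg, integral_const_mul]
  -- Part 1 : the x-divergence term
  have hintTi : ∀ i : Fin d,
      Integrable (fun v => v i * T v (EuclideanSpace.single i (1:ℝ))) ν := fun i =>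
    integrable_of_continuous ν hν _
      ((coord_continuous i).mul (hTcont.clm_apply continuous_const))
  have hP1 : ∫ v, T v v ∂ν
      = ∑ i, ∫ v, v i * T v (EuclideanSpace.single i (1:ℝ)) ∂ν := by
    rw [← integral_finset_sum _ (fun i _ => hintTi i)]
    refine integral_congr_ae (Filter.Eventually.of_forall fun v => ?_)
    exact clm_decomp v (T v)
  have hintSmul : ∀ i : Fin d, Integrable (fun v => (v i) • T v) ν := fun i =>
    integrable_of_continuous ν hν _ ((coord_continuous i).smul hTcont)
  have hRHSi : ∀ i : Fin d,
      fderiv ℝ (fun x => ∫ v, g (x, v) * v i ∂ν) ξ (EuclideanSpace.single i (1:ℝ))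
        = ∫ v, v i * T v (EuclideanSpace.single i (1:ℝ)) ∂ν := by
    intro i
    rw [(fderiv_under_integral ν hν g hg ξ i).fderiv]
    rw [ContinuousLinearMap.integral_apply (hintSmul i)]
    refine integral_congr_ae (Filter.Eventually.of_forall fun v => ?_)
    show (v i • T v) (EuclideanSpace.single i (1:ℝ))
      = v i * T v (EuclideanSpace.single i (1:ℝ))
    rw [ContinuousLinearMap.smul_apply, smul_eq_mul]
  have hS : (∑ i : Fin d,
      fderiv ℝ (fun x => ∫ v, g (x, v) * v i ∂ν) ξ (EuclideanSpace.single i (1:ℝ)))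
      = ∫ v, T v v ∂ν := by
    rw [hP1]
    exact Finset.sum_congr rfl fun i _ => hRHSi i
  -- Part 2 : the sphere divergence identity
  have hdiv : ∀ i : Fin d,
      ∫ v, (D v (EuclideanSpace.single i (1:ℝ)) - v i * D v v) ∂ν
        = ((d:ℝ)-1) * ∫ v, v i * g (ξ, v) ∂ν := fun i =>
    div_id ν hν hd _ hgslice i
  have hintDi : ∀ i : Fin d, Integrable
      (fun v => w i * (D v (EuclideanSpace.single i (1:ℝ)) - v i * D v v)) ν := fun i =>
    integrable_of_continuous ν hν _
      (continuous_const.mul ((hDcont.clm_apply continuous_const).sub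
        ((coord_continuous i).mul (hDcont.clm_apply continuous_id))))
  have hP2 : ∫ v, (D v w - ⟪w, v⟫ * D v v) ∂ν
      = ∑ i, w i * (((d:ℝ)-1) * ∫ v, v i * g (ξ, v) ∂ν) := by
    have hpt2 : ∀ v, D v w - ⟪w, v⟫ * D v v
        = ∑ i, w i * (D v (EuclideanSpace.single i (1:ℝ)) - v i * D v v) := by
      intro v
      rw [clm_decomp w (D v), PiLp.inner_apply]
      simp only [RCLike.inner_apply, conj_trivial]
      rw [Finset.sum_mul, ← Finset.sum_sub_distrib]
      exact Finset.sum_congr rfl fun i _ => by ring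
    calc ∫ v, (D v w - ⟪w, v⟫ * D v v) ∂ν
        = ∫ v, ∑ i, w i * (D v (EuclideanSpace.single i (1:ℝ)) - v i * D v v) ∂ν :=
          integral_congr_ae (Filter.Eventually.of_forall hpt2)
      _ = ∑ i, ∫ v, w i * (D v (EuclideanSpace.single i (1:ℝ)) - v i * D v v) ∂ν :=
          integral_finset_sum _ (fun i _ => hintDi i)
      _ = ∑ i, w i * (((d:ℝ)-1) * ∫ v, v i * g (ξ, v) ∂ν) :=
          Finset.sum_congr rfl fun i _ => by rw [integral_const_mul, hdiv i]
  have hintvg : ∀ i : Fin d, Integrable (fun v => v i * g (ξ, v)) ν := fun i =>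
    integrable_of_continuous ν hν _ ((coord_continuous i).mul hgslice.continuous)
  have hJ : Integrable (fun v => g (ξ, v) • v) ν :=
    integrable_of_continuous ν hν _ (hgslice.continuous.smul continuous_id)
  have hwJ : ⟪w, ∫ v, g (ξ, v) • v ∂ν⟫ = ∑ i, w i * ∫ v, v i * g (ξ, v) ∂ν := by
    rw [← integral_inner hJ w]
    calc ∫ v, ⟪w, g (ξ, v) • v⟫ ∂ν
        = ∫ v, ∑ i, w i * (v i * g (ξ, v)) ∂ν := by
          refine integral_congr_ae (Filter.Eventually.of_forall fun v => ?_)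
          show ⟪w, g (ξ, v) • v⟫ = ∑ i, w i * (v i * g (ξ, v))
          rw [real_inner_smul_right, PiLp.inner_apply]
          simp only [RCLike.inner_apply, conj_trivial]
          rw [Finset.mul_sum]
          exact Finset.sum_congr rfl fun i _ => by ring
      _ = ∑ i, ∫ v, w i * (v i * g (ξ, v)) ∂ν :=
          integral_finset_sum _ (fun i _ => (hintvg i).const_mul _)
      _ = ∑ i, w i * ∫ v, v i * g (ξ, v) ∂ν :=
          Finset.sum_congr rfl fun i _ => integral_const_mul _ _
  have hne : ((d:ℝ) - 1) ≠ 0 := by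
    have h2 : (2:ℝ) ≤ (d:ℝ) := by exact_mod_cast hd
    linarith
  have hP2' : (1/((d:ℝ)-1)) * ∫ v, (D v w - ⟪w, v⟫ * D v v) ∂ν
      = ⟪w, ∫ v, g (ξ, v) • v ∂ν⟫ := by
    rw [hP2, hwJ, Finset.mul_sum]
    refine Finset.sum_congr rfl fun i _ => ?_
    field_simp
  rw [hsplit, hP2', hS]
  ring
end Main
end

section
/- Let d ∈ ℕ, d ≥ 2, let v ∈ ℝ^d with ‖v‖ = 1, and let u₀, w₁, …, w_d, w ∈ ℝ^d all be orthogonal to v. Then the linear span in ℝ × ℝ^d × ℝ^d of the 2d + 2 vectors (1, v, u₀); (0, 0, e_j − v_j v) for j = 1, …, d; (0, e_j − v_j v, w_j) for j = 1, …, d; and (0, −(d−1) v, w), has dimension exactly 2d. (This is the linear-algebra core of the verification of the parabolic Hörmander condition: the vector fields 𝒩₀ + ∂_t, 𝒩₁,…,𝒩_d together with the brackets [𝒩_j, 𝒩₀ + ∂_t] and Σ_j [𝒩_j, [𝒩_j, 𝒩₀ + ∂_t]] span the 2d-dimensional tangent space of (0,∞) × ℝ^d × S^{d−1} at every point.) 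-/
open scoped RealInnerProductSpace

/-- Linear-algebra core of the parabolic Hörmander condition for the fiber lay-down
process: for `d ≥ 2`, a unit vector `v ∈ ℝ^d` and vectors `u₀, w₁, …, w_d, w` all
orthogonal to `v`, the span in `ℝ × ℝ^d × ℝ^d` of the `2d + 2` vectors
`(1, v, u₀)`, `(0, 0, e_j - v_j v)` (`j = 1, …, d`), `(0, e_j - v_j v, w_j)`
(`j = 1, …, d`) and `(0, -(d-1) v, w)` has dimension exactly `2d`. -/
theorem hormander_span_dimension
    (d : ℕ) (hd : 2 ≤ d)
    (v u₀ w' : EuclideanSpace ℝ (Fin d)) (w : Fin d → EuclideanSpace ℝ (Fin d))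
    (hv : ‖v‖ = 1) (hu₀ : ⟪u₀, v⟫ = 0) (hw : ∀ j, ⟪w j, v⟫ = 0) (hw' : ⟪w', v⟫ = 0) :
    Module.finrank ℝ
      (Submodule.span ℝ
        (insert ((1 : ℝ), v, u₀)
          ((Set.range fun j : Fin d =>
              ((0 : ℝ), (0 : EuclideanSpace ℝ (Fin d)),
                EuclideanSpace.single j (1 : ℝ) - (v j) • v)) ∪
           (Set.range fun j : Fin d =>
              ((0 : ℝ), EuclideanSpace.single j (1 : ℝ) - (v j) • v, w j)) ∪
           {((0 : ℝ), -(((d : ℝ) - 1)) • v, w')}))) = 2 * d := by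
  classical
  have hvv : ⟪v, v⟫ = 1 := by rw [real_inner_self_eq_norm_sq, hv]; norm_num
  set p : Fin d → EuclideanSpace ℝ (Fin d) :=
    fun j => EuclideanSpace.single j (1 : ℝ) - v j • v with hpdef
  have hvp : ∀ j, ⟪v, p j⟫ = 0 := by
    intro j
    rw [hpdef]
    rw [inner_sub_right, real_inner_smul_right, hvv, mul_one,
      EuclideanSpace.inner_single_right]
    simp
  -- every vector orthogonal to v is a combination of the p j
  have hsum : ∀ y : EuclideanSpace ℝ (Fin d), ⟪v, y⟫ = 0 → y = ∑ j, y j • p j := by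
    intro y hy
    have hyv : ∑ j, y j * v j = 0 := by
      rw [real_inner_comm] at hy
      simpa [PiLp.inner_apply, RCLike.inner_apply, mul_comm] using hy
    have h1 : (∑ j, y j • p j) = (∑ j, y j • EuclideanSpace.single j (1 : ℝ))
        - (∑ j, y j * v j) • v := by
      simp [hpdef, smul_sub, Finset.sum_sub_distrib, Finset.sum_smul, smul_smul]
    rw [h1, hyv, zero_smul, sub_zero]
    ext i
    rw [WithLp.ofLp_sum, Finset.sum_apply]
    simp [EuclideanSpace.single_apply, Finset.sum_ite_eq, Finset.sum_ite_eq']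
  -- the functional
  set f : ℝ × EuclideanSpace ℝ (Fin d) × EuclideanSpace ℝ (Fin d) →ₗ[ℝ] ℝ :=
    (innerSL ℝ v).toLinearMap.comp
      ((LinearMap.snd ℝ (EuclideanSpace ℝ (Fin d)) (EuclideanSpace ℝ (Fin d))).comp
        (LinearMap.snd ℝ ℝ (EuclideanSpace ℝ (Fin d) × EuclideanSpace ℝ (Fin d)))) with hfdef
  have hf : ∀ x : ℝ × EuclideanSpace ℝ (Fin d) × EuclideanSpace ℝ (Fin d),
      f x = ⟪v, x.2.2⟫ := fun x => rfl
  set S : Submodule ℝ (ℝ × EuclideanSpace ℝ (Fin d) × EuclideanSpace ℝ (Fin d)) :=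
    Submodule.span ℝ
        (insert ((1 : ℝ), v, u₀)
          ((Set.range fun j : Fin d =>
              ((0 : ℝ), (0 : EuclideanSpace ℝ (Fin d)),
                EuclideanSpace.single j (1 : ℝ) - (v j) • v)) ∪
           (Set.range fun j : Fin d =>
              ((0 : ℝ), EuclideanSpace.single j (1 : ℝ) - (v j) • v, w j)) ∪
           {((0 : ℝ), -(((d : ℝ) - 1)) • v, w')})) with hSdef
  have genA : ((1 : ℝ), v, u₀) ∈ S := Submodule.subset_span (Set.mem_insert _ _)
  have genB : ∀ j, ((0 : ℝ), (0 : EuclideanSpace ℝ (Fin d)), p j) ∈ S := fun j =>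
    Submodule.subset_span (Set.mem_insert_of_mem _ (Or.inl (Or.inl ⟨j, rfl⟩)))
  have genC : ∀ j, ((0 : ℝ), p j, w j) ∈ S := fun j =>
    Submodule.subset_span (Set.mem_insert_of_mem _ (Or.inl (Or.inr ⟨j, rfl⟩)))
  have genD : ((0 : ℝ), -(((d : ℝ) - 1)) • v, w') ∈ S :=
    Submodule.subset_span (Set.mem_insert_of_mem _ (Or.inr rfl))
  -- (0,0,y) ∈ S for y ⊥ v
  have h1 : ∀ y : EuclideanSpace ℝ (Fin d), ⟪v, y⟫ = 0 →
      ((0 : ℝ), (0 : EuclideanSpace ℝ (Fin d)), y) ∈ S := by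
    intro y hy
    have heq : ((0 : ℝ), (0 : EuclideanSpace ℝ (Fin d)), y)
        = ∑ j, y j • ((0 : ℝ), (0 : EuclideanSpace ℝ (Fin d)), p j) := by
      rw [Prod.ext_iff, Prod.ext_iff]
      refine ⟨by simp [Prod.fst_sum], by simp [Prod.fst_sum, Prod.snd_sum], ?_⟩
      simp only [Prod.snd_sum, Prod.smul_mk]
      simpa using hsum y hy
    rw [heq]
    exact Submodule.sum_mem _ fun j _ => Submodule.smul_mem _ _ (genB j)
  have genC0 : ∀ j, ((0 : ℝ), p j, (0 : EuclideanSpace ℝ (Fin d))) ∈ S := by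
    intro j
    have hwj : ⟪v, w j⟫ = 0 := by rw [real_inner_comm]; exact hw j
    have := S.sub_mem (genC j) (h1 (w j) hwj)
    simpa using this
  -- (0,y,0) ∈ S for y ⊥ v
  have h2 : ∀ y : EuclideanSpace ℝ (Fin d), ⟪v, y⟫ = 0 →
      ((0 : ℝ), y, (0 : EuclideanSpace ℝ (Fin d))) ∈ S := by
    intro y hy
    have heq : ((0 : ℝ), y, (0 : EuclideanSpace ℝ (Fin d)))
        = ∑ j, y j • ((0 : ℝ), p j, (0 : EuclideanSpace ℝ (Fin d))) := by
      rw [Prod.ext_iff, Prod.ext_iff]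
      refine ⟨by simp [Prod.fst_sum], ?_, by simp [Prod.fst_sum, Prod.snd_sum]⟩
      simp only [Prod.snd_sum, Prod.fst_sum, Prod.smul_mk]
      simpa using hsum y hy
    rw [heq]
    exact Submodule.sum_mem _ fun j _ => Submodule.smul_mem _ _ (genC0 j)
  have hw'v : ⟪v, w'⟫ = 0 := by rw [real_inner_comm]; exact hw'
  have hu₀v : ⟪v, u₀⟫ = 0 := by rw [real_inner_comm]; exact hu₀
  -- (0,v,0) ∈ S
  have h3 : ((0 : ℝ), v, (0 : EuclideanSpace ℝ (Fin d))) ∈ S := by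
    have hD0 : ((0 : ℝ), -(((d : ℝ) - 1)) • v, (0 : EuclideanSpace ℝ (Fin d))) ∈ S := by
      have := S.sub_mem genD (h1 w' hw'v)
      simpa using this
    have hne : -(((d : ℝ) - 1)) ≠ 0 := by
      have : (2 : ℝ) ≤ (d : ℝ) := by exact_mod_cast hd
      intro h; rw [neg_eq_zero, sub_eq_zero] at h; linarith
    have hm := S.smul_mem (-(((d : ℝ) - 1)))⁻¹ hD0
    have heq : (-(((d : ℝ) - 1)))⁻¹ • ((0 : ℝ), -(((d : ℝ) - 1)) • v,
          (0 : EuclideanSpace ℝ (Fin d)))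
        = ((0 : ℝ), v, (0 : EuclideanSpace ℝ (Fin d))) := by
      rw [Prod.smul_mk, Prod.smul_mk, smul_smul, inv_mul_cancel₀ hne, one_smul]
      simp
    rwa [heq] at hm
  -- (1,0,0) ∈ S
  have h4 : ((1 : ℝ), (0 : EuclideanSpace ℝ (Fin d)), (0 : EuclideanSpace ℝ (Fin d))) ∈ S := by
    have := S.sub_mem (S.sub_mem genA h3) (h1 u₀ hu₀v)
    simp at this; exact this
  -- S = ker f
  have hSker : S = LinearMap.ker f := by
    apply le_antisymm
    · rw [hSdef, Submodule.span_le]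
      rintro x hx
      simp only [Set.mem_insert_iff, Set.mem_union, Set.mem_range,
        Set.mem_singleton_iff] at hx
      rcases hx with rfl | ((⟨j, rfl⟩ | ⟨j, rfl⟩) | rfl) <;>
        simp only [SetLike.mem_coe, LinearMap.mem_ker, hf]
      · exact hu₀v
      · exact hvp j
      · rw [real_inner_comm]; exact hw j
      · exact hw'v
    · rintro ⟨t, a, b⟩ hx
      have hb : ⟪v, b⟫ = 0 := hx
      have ha : ⟪v, a - ⟪v, a⟫ • v⟫ = 0 := by
        rw [inner_sub_right, real_inner_smul_right, hvv, mul_one, sub_self]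
      have hdecomp : ((t : ℝ), a, b)
          = t • ((1 : ℝ), (0 : EuclideanSpace ℝ (Fin d)), (0 : EuclideanSpace ℝ (Fin d)))
            + ⟪v, a⟫ • ((0 : ℝ), v, (0 : EuclideanSpace ℝ (Fin d)))
            + ((0 : ℝ), a - ⟪v, a⟫ • v, (0 : EuclideanSpace ℝ (Fin d)))
            + ((0 : ℝ), (0 : EuclideanSpace ℝ (Fin d)), b) := by
        rw [Prod.ext_iff, Prod.ext_iff]
        refine ⟨by simp, by simp, by simp⟩
      rw [hdecomp]
      exact S.add_mem (S.add_mem (S.add_mem (S.smul_mem _ h4) (S.smul_mem _ h3))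
        (h2 _ ha)) (h1 _ hb)
  -- dimension count
  have hsurj : Function.Surjective f := by
    intro r
    exact ⟨((0 : ℝ), (0 : EuclideanSpace ℝ (Fin d)), r • v),
      by rw [hf]; show ⟪v, r • v⟫ = r; rw [real_inner_smul_right, hvv, mul_one]⟩
  have hcount := LinearMap.finrank_range_add_finrank_ker f
  rw [LinearMap.range_eq_top.mpr hsurj, finrank_top] at hcount
  have hdim : Module.finrank ℝ
      (ℝ × EuclideanSpace ℝ (Fin d) × EuclideanSpace ℝ (Fin d)) = 2 * d + 1 := by
    rw [Module.finrank_prod, Module.finrank_prod, Module.finrank_self,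
      finrank_euclideanSpace_fin]
    ring
  rw [hdim, Module.finrank_self] at hcount
  rw [hSker]
  omega
end
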